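/- Let Z₁,…,Zₙ be i.i.d. random variables each following the Laplace distribution Lap(b) with mean 0 and scale b > 0, and let Z = Z₁ + ⋯ + Zₙ. Then for all 0 < t < 2√2·b·n, Pr[|Z| > t] ≤ 2·exp(−t²/(8nb²)). -/

import Mathlib

open MeasureTheory ProbabilityTheory

/-- The Laplace distribution with scale `b`: the measure on `ℝ` with density
`x ↦ (1/(2b)) · exp(-|x|/b)` with respect to Lebesgue measure. -/
noncomputable def lap (b : ℝ) : Measure ℝ :=
  volume.withDensity (fun x => ENNReal.ofReal ((1 / (2 * b)) * Real.exp (-|x| / b)))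

section auxLemmas
open Real Set
open scoped ENNReal NNReal


lemma expInt_Ioi {a : ℝ} (ha : 0 < a) :
    IntegrableOn (fun x : ℝ => Real.exp (-(a * x))) (Ioi (0:ℝ)) ∧
      ∫ x in Ioi (0:ℝ), Real.exp (-(a * x)) = a⁻¹ := by
  constructor
  · have := exp_neg_integrableOn_Ioi 0 ha
    simpa [neg_mul] using this
  · have h := integral_comp_mul_left_Ioi (fun x => Real.exp (-x)) 0 ha
    simp only [mul_zero, integral_exp_neg_Ioi, neg_zero, Real.exp_zero, smul_eq_mul,
      mul_one] at h
    exact h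

lemma expInt_Iic {a : ℝ} (ha : 0 < a) :
    IntegrableOn (fun x : ℝ => Real.exp (a * x)) (Iic (0:ℝ)) ∧
      ∫ x in Iic (0:ℝ), Real.exp (a * x) = a⁻¹ := by
  have A : MeasurableEmbedding (fun x : ℝ => -x) :=
    (Homeomorph.neg ℝ).isClosedEmbedding.measurableEmbedding
  constructor
  · have h1 : IntegrableOn (fun x : ℝ => Real.exp (-(a * x))) (Ioi (0:ℝ)) := (expInt_Ioi ha).1
    have h2 : IntegrableOn (fun x : ℝ => Real.exp (a * (-x))) ((fun x : ℝ => -x) ⁻¹' Iic 0) := by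
      have : ((fun x : ℝ => -x) ⁻¹' Iic 0) = Ici 0 := by ext x; simp
      rw [this, integrableOn_Ici_iff_integrableOn_Ioi]
      exact h1.congr_fun (fun x _ => by ring_nf) measurableSet_Ioi
    have h3 := (A.integrableOn_map_iff (μ := (volume : Measure ℝ))
      (f := fun x : ℝ => Real.exp (a * x)) (s := Iic 0))
    rw [Measure.map_neg_eq_self (volume : Measure ℝ)] at h3
    exact h3.mpr h2
  · have h := integral_comp_neg_Iic (0:ℝ) (fun x => Real.exp (-(a * x)))
    simp only [mul_neg, neg_neg, neg_zero] at h
    rw [h, (expInt_Ioi ha).2]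

lemma lap_exp (b : ℝ) (hb : 0 < b) (l : ℝ) (hl : |l| * b < 1) :
    Integrable (fun x => Real.exp (l * x)) (lap b) ∧
      ∫ x, Real.exp (l * x) ∂(lap b) = 1 / (1 - l ^ 2 * b ^ 2) := by
  have hbne : b ≠ 0 := hb.ne'
  have hlb : |l| < 1 / b := by rwa [lt_div_iff₀ hb]
  have hpos1 : 0 < 1 / b - l := by
    have := (abs_lt.1 hlb).2; linarith
  have hpos2 : 0 < l + 1 / b := by
    have := (abs_lt.1 hlb).1; linarith
  set c : ℝ := 1 / (2 * b) with hc
  have hcpos : 0 < c := by positivity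
  set F : ℝ → ℝ := fun x => c * Real.exp (-|x| / b) * Real.exp (l * x) with hF
  have hIoi : IntegrableOn F (Ioi (0:ℝ)) := by
    have h0 : IntegrableOn (fun x => c * Real.exp (-((1/b - l) * x))) (Ioi (0:ℝ)) :=
      ((expInt_Ioi hpos1).1).const_mul c
    refine h0.congr_fun (fun x hx => ?_) measurableSet_Ioi
    have hax : |x| = x := abs_of_pos hx
    simp only [hF, hax, mul_assoc, ← Real.exp_add]
    congr 1
    field_simp
    ring
  have hIic : IntegrableOn F (Iic (0:ℝ)) := by
    have h0 : IntegrableOn (fun x => c * Real.exp ((l + 1/b) * x)) (Iic (0:ℝ)) :=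
      ((expInt_Iic hpos2).1).const_mul c
    refine h0.congr_fun (fun x hx => ?_) measurableSet_Iic
    have hax : |x| = -x := abs_of_nonpos hx
    simp only [hF, hax, mul_assoc, ← Real.exp_add]
    congr 1
    field_simp
    ring
  have hFint : Integrable F := by
    have := hIic.union hIoi
    rwa [Iic_union_Ioi, integrableOn_univ] at this
  have hIoiv : ∫ x in Ioi (0:ℝ), F x = c * (1 / b - l)⁻¹ := by
    rw [setIntegral_congr_fun measurableSet_Ioi
      (g := fun x => c * Real.exp (-((1/b - l) * x)))]
    · rw [integral_const_mul, (expInt_Ioi hpos1).2]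
    · intro x hx
      have hax : |x| = x := abs_of_pos hx
      simp only [hF, hax, mul_assoc, ← Real.exp_add]
      congr 1
      field_simp
      ring
  have hIicv : ∫ x in Iic (0:ℝ), F x = c * (l + 1 / b)⁻¹ := by
    rw [setIntegral_congr_fun measurableSet_Iic
      (g := fun x => c * Real.exp ((l + 1/b) * x))]
    · rw [integral_const_mul, (expInt_Iic hpos2).2]
    · intro x hx
      have hax : |x| = -x := abs_of_nonpos hx
      simp only [hF, hax, mul_assoc, ← Real.exp_add]
      congr 1
      field_simp
      ring
  have hFval : ∫ x, F x = 1 / (1 - l ^ 2 * b ^ 2) := by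
    rw [← intervalIntegral.integral_Iic_add_Ioi (b := (0:ℝ)) hIic hIoi, hIoiv, hIicv]
    have h1 : (1 : ℝ) / b - l ≠ 0 := hpos1.ne'
    have h2 : l + 1 / b ≠ 0 := hpos2.ne'
    have hx1 : (0:ℝ) < 1 - l * b := by nlinarith [le_abs_self l, abs_nonneg l]
    have hx2 : (0:ℝ) < 1 + l * b := by nlinarith [neg_abs_le l, abs_nonneg l]
    have eA : 1 / b - l = (1 - l * b) / b := by field_simp
    have eB : l + 1 / b = (1 + l * b) / b := by field_simp; ring
    rw [eA, eB, inv_div, inv_div, hc]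
    rw [show 1 - l ^ 2 * b ^ 2 = (1 - l * b) * (1 + l * b) by ring]
    have e1 : 1 - l * b ≠ 0 := hx1.ne'
    have e2 : 1 + l * b ≠ 0 := hx2.ne'
    field_simp
    ring_nf
    have f1 : 1 + b * l ≠ 0 := by rw [mul_comm]; exact e2
    have f2 : 1 - b * l ≠ 0 := by rw [mul_comm]; exact e1
    rw [show 1 - b ^ 2 * l ^ 2 = (1 - b * l) * (1 + b * l) by ring]
    field_simp
    ring
  have hdm : Measurable fun x : ℝ => (c * Real.exp (-|x| / b)).toNNReal :=
    ((((measurable_id.abs).neg).div_const b).exp.const_mul c).real_toNNReal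
  have hlap : lap b = volume.withDensity fun x => ((c * Real.exp (-|x| / b)).toNNReal : ℝ≥0∞) :=
    rfl
  have key : (fun x : ℝ => ((c * Real.exp (-|x| / b)).toNNReal : ℝ) • Real.exp (l * x)) = F := by
    funext x
    rw [Real.coe_toNNReal _ (by positivity), smul_eq_mul]
  have key2 : (fun x : ℝ => ((c * Real.exp (-|x| / b)).toNNReal : ℝ≥0) • Real.exp (l * x))
      = F := by
    funext x
    rw [NNReal.smul_def, Real.coe_toNNReal _ (by positivity), smul_eq_mul]
  constructor
  · rw [hlap, integrable_withDensity_iff_integrable_coe_smul hdm, key]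
    exact hFint
  · rw [hlap, integral_withDensity_eq_integral_smul hdm, key2]
    exact hFval

end auxLemmas

/-- **Concentration of sums of i.i.d. Laplace random variables.** If `Z₁, …, Zₙ` are i.i.d.
`Lap(b)` random variables with sum `Z`, then for all `0 < t < 2√2·b·n`,
`Pr[|Z| > t] ≤ 2·exp(-t²/(8nb²))`. -/
theorem laplace_sum_concentration {Ω : Type*} [MeasurableSpace Ω]
    (μ : Measure Ω) [IsProbabilityMeasure μ] (n : ℕ) (b : ℝ) (hb : 0 < b)
    (Z : Fin n → Ω → ℝ) (hmeas : ∀ i, Measurable (Z i))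
    (hindep : iIndepFun Z μ)
    (hlaw : ∀ i, μ.map (Z i) = lap b)
    (t : ℝ) (ht0 : 0 < t) (ht1 : t < 2 * Real.sqrt 2 * b * n) :
    μ {ω | t < |∑ i, Z i ω|} ≤ ENNReal.ofReal (2 * Real.exp (-(t ^ 2) / (8 * n * b ^ 2))) := by
  have hs2 : (Real.sqrt 2) ^ 2 = 2 := Real.sq_sqrt (by norm_num)
  have hs2' : (0:ℝ) ≤ Real.sqrt 2 := Real.sqrt_nonneg 2
  have hn : (0:ℝ) < n := by
    rcases Nat.eq_zero_or_pos n with h | h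
    · subst h; simp at ht1; linarith
    · exact_mod_cast h
  have hnne : (n:ℝ) ≠ 0 := hn.ne'
  have hbne : b ≠ 0 := hb.ne'
  set l : ℝ := t / (4 * n * b ^ 2) with hl
  have hlpos : 0 < l := by positivity
  have ht2 : t ^ 2 < 8 * (n:ℝ) ^ 2 * b ^ 2 := by
    have h := mul_self_lt_mul_self ht0.le ht1
    nlinarith
  have hub : l ^ 2 * b ^ 2 = t ^ 2 / (16 * (n:ℝ) ^ 2 * b ^ 2) := by
    rw [hl]; field_simp; ring
  have hu2 : l ^ 2 * b ^ 2 < 1 / 2 := by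
    rw [hub, div_lt_iff₀ (by positivity)]; nlinarith
  have hlb : l * b < 1 := by nlinarith
  -- mgf of each Z i at ±l
  set u : ℝ := l ^ 2 * b ^ 2 with hu
  have hu0 : 0 ≤ u := by positivity
  have hu1 : 1 - u > 0 := by rw [hu]; linarith
  have habs : ∀ s : ℝ, s = l ∨ s = -l → |s| * b < 1 := by
    rintro s (rfl | rfl)
    · rwa [abs_of_pos hlpos]
    · rw [abs_neg, abs_of_pos hlpos]; exact hlb
  have hgmeas : ∀ s : ℝ, Measurable fun x : ℝ => Real.exp (s * x) :=
    fun s => (measurable_id.const_mul s).exp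
  have hint : ∀ (s : ℝ), s = l ∨ s = -l → ∀ i,
      Integrable (fun ω => Real.exp (s * Z i ω)) μ := by
    intro s hs i
    have h := (lap_exp b hb s (habs s hs)).1
    rw [← hlaw i] at h
    exact (integrable_map_measure (hgmeas s).aestronglyMeasurable
      (hmeas i).aemeasurable).mp h
  have hmgf : ∀ (s : ℝ), s = l ∨ s = -l → ∀ i,
      mgf (Z i) μ s = 1 / (1 - u) := by
    intro s hs i
    have hsq : s ^ 2 = l ^ 2 := by rcases hs with rfl | rfl <;> ring
    rw [mgf, ← integral_map (hmeas i).aemeasurable (hgmeas s).aestronglyMeasurable,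
      hlaw i, (lap_exp b hb s (habs s hs)).2, hsq]
  -- the sum
  set S : Ω → ℝ := ∑ i, Z i with hS
  have hmgfS : ∀ (s : ℝ), s = l ∨ s = -l → mgf S μ s = (1 / (1 - u)) ^ n := by
    intro s hs
    rw [hS, hindep.mgf_sum hmeas Finset.univ]
    simp [hmgf s hs]
  have hintS : ∀ (s : ℝ), s = l ∨ s = -l →
      Integrable (fun ω => Real.exp (s * S ω)) μ :=
    fun s hs => hindep.integrable_exp_mul_sum hmeas (fun i _ => hint s hs i)
  -- mgf bound
  have hbass : (1:ℝ) / (1 - u) ≤ Real.exp (2 * u) := by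
    rw [div_le_iff₀ hu1]
    nlinarith [mul_le_mul_of_nonneg_right (Real.add_one_le_exp (2 * u))
      (by linarith : (0:ℝ) ≤ 1 - u)]
  have hKey : Real.exp (-l * t) * (1 / (1 - u)) ^ n ≤
      Real.exp (-(t ^ 2) / (8 * n * b ^ 2)) := by
    have h1 : (1 / (1 - u)) ^ n ≤ Real.exp (2 * u) ^ n :=
      pow_le_pow_left₀ (by positivity) hbass n
    have h2 : Real.exp (-l * t) * Real.exp (2 * u) ^ n
        = Real.exp (-(t ^ 2) / (8 * n * b ^ 2)) := by
      rw [← Real.exp_nat_mul, ← Real.exp_add]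
      congr 1
      rw [hu, hl]
      field_simp
      ring
    calc Real.exp (-l * t) * (1 / (1 - u)) ^ n
        ≤ Real.exp (-l * t) * Real.exp (2 * u) ^ n := by
          exact mul_le_mul_of_nonneg_left h1 (Real.exp_pos _).le
      _ = _ := h2
  -- Chernoff both sides
  have hA : (μ {ω | t ≤ S ω}).toReal ≤ Real.exp (-(t ^ 2) / (8 * n * b ^ 2)) := by
    refine le_trans (measure_ge_le_exp_mul_mgf t hlpos.le (hintS l (Or.inl rfl))) ?_
    rw [hmgfS l (Or.inl rfl)]
    exact hKey
  have hB : (μ {ω | S ω ≤ -t}).toReal ≤ Real.exp (-(t ^ 2) / (8 * n * b ^ 2)) := by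
    refine le_trans (measure_le_le_exp_mul_mgf (-t) (neg_nonpos.mpr hlpos.le)
      (hintS (-l) (Or.inr rfl))) ?_
    rw [hmgfS (-l) (Or.inr rfl)]
    have : -(-l) * -t = -l * t := by ring
    rw [this]
    exact hKey
  -- combine
  have hsub : {ω | t < |∑ i, Z i ω|} ⊆ {ω | t ≤ S ω} ∪ {ω | S ω ≤ -t} := by
    intro ω hω
    simp only [Set.mem_setOf_eq] at hω
    have hSω : S ω = ∑ i, Z i ω := by rw [hS]; simp
    rcases lt_abs.mp hω with h | h
    · left; simp only [Set.mem_setOf_eq, hSω]; linarith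
    · right; simp only [Set.mem_setOf_eq, hSω]; linarith
  set K := Real.exp (-(t ^ 2) / (8 * n * b ^ 2)) with hK
  have hAK : μ {ω | t ≤ S ω} ≤ ENNReal.ofReal K := by
    rw [← ENNReal.ofReal_toReal (measure_ne_top μ _)]
    exact ENNReal.ofReal_le_ofReal hA
  have hBK : μ {ω | S ω ≤ -t} ≤ ENNReal.ofReal K := by
    rw [← ENNReal.ofReal_toReal (measure_ne_top μ _)]
    exact ENNReal.ofReal_le_ofReal hB
  calc μ {ω | t < |∑ i, Z i ω|} ≤ μ ({ω | t ≤ S ω} ∪ {ω | S ω ≤ -t}) := measure_mono hsub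
    _ ≤ μ {ω | t ≤ S ω} + μ {ω | S ω ≤ -t} := measure_union_le _ _
    _ ≤ ENNReal.ofReal K + ENNReal.ofReal K := add_le_add hAK hBK
    _ = ENNReal.ofReal (2 * K) := by
        rw [← ENNReal.ofReal_add (Real.exp_pos _).le (Real.exp_pos _).le]
        congr 1
        ring
    _ = ENNReal.ofReal (2 * Real.exp (-(t ^ 2) / (8 * n * b ^ 2))) := by rw [hK]
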